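/- Monotone decay of the DEKI spread energy: suppose ‖A_t‖ ≤ A_max for all t ≥ 1, that E_0 > 0, and that the step size satisfies h ≤ (α/(J(A_max + α)²))·E_0^{-1}. Then for every t ∈ ℕ one has E_{t+1} ≤ E_t − (hα/J)·E_t²; in particular the sequence (E_t) is monotonically decreasing. -/

import Mathlib

open Matrix BigOperators

noncomputable section

/-- Sample mean of an ensemble. -/
def ensMean {d : ℕ} (J : ℕ) (z : Fin J → Fin d → ℝ) : Fin d → ℝ :=
  (J : ℝ)⁻¹ • ∑ j, z j

/-- Ensemble spread `e^{(j)} = z^{(j)} - z̄`. -/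
def ensSpread {d : ℕ} (J : ℕ) (z : Fin J → Fin d → ℝ) (j : Fin J) : Fin d → ℝ :=
  z j - ensMean J z

/-- Sample covariance `C = (1/J) ∑_j e^{(j)} (e^{(j)})ᵀ`. -/
def ensCov {d : ℕ} (J : ℕ) (z : Fin J → Fin d → ℝ) : Matrix (Fin d) (Fin d) ℝ :=
  (J : ℝ)⁻¹ • ∑ j, vecMulVec (ensSpread J z j) (ensSpread J z j)

/-- Squared Euclidean norm of a vector in `ℝ^d`. -/
def enormSq {d : ℕ} (v : Fin d → ℝ) : ℝ := ∑ i, (v i)^2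

/-- Ensemble spread energy `E = (1/J)∑_j ‖e^{(j)}‖²`. -/
def ensEnergy {d : ℕ} (J : ℕ) (z : Fin J → Fin d → ℝ) : ℝ :=
  (J : ℝ)⁻¹ * ∑ j, enormSq (ensSpread J z j)

/-- The (Euclidean) operator norm of a square matrix. -/
def opNorm {d : ℕ} (M : Matrix (Fin d) (Fin d) ℝ) : ℝ :=
  ‖Matrix.toEuclideanCLM (𝕜 := ℝ) M‖

/- ### Auxiliary lemmas -/

set_option linter.unusedSectionVars false
set_option linter.unusedVariables false

/-- Identification of `Fin d → ℝ` with `EuclideanSpace ℝ (Fin d)`. -/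
def toE {d : ℕ} (v : Fin d → ℝ) : EuclideanSpace ℝ (Fin d) := (WithLp.equiv 2 _).symm v

lemma toE_add {d : ℕ} (a b : Fin d → ℝ) : toE (a + b) = toE a + toE b := rfl
lemma toE_smul {d : ℕ} (c : ℝ) (a : Fin d → ℝ) : toE (c • a) = c • toE a := rfl
lemma toE_sum {d J : ℕ} (f : Fin J → Fin d → ℝ) : toE (∑ j, f j) = ∑ j, toE (f j) :=
  WithLp.toLp_sum (p := 2) (s := Finset.univ) (f := f)

lemma norm_toE_sq {d : ℕ} (v : Fin d → ℝ) : ‖toE v‖^2 = enormSq v := by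
  rw [EuclideanSpace.norm_eq, Real.sq_sqrt (by positivity)]
  simp [enormSq, toE, Real.norm_eq_abs, sq_abs]

lemma norm_toE_nonneg_sq {d : ℕ} (v : Fin d → ℝ) : enormSq v = ‖toE v‖^2 := (norm_toE_sq v).symm

lemma inner_toE {d : ℕ} (a b : Fin d → ℝ) : (inner ℝ (toE a) (toE b) : ℝ) = a ⬝ᵥ b := by
  simp [toE, PiLp.inner_apply, dotProduct, mul_comm]

lemma enormSq_nonneg {d : ℕ} (v : Fin d → ℝ) : 0 ≤ enormSq v :=
  Finset.sum_nonneg fun _ _ => sq_nonneg _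

lemma ensEnergy_nonneg {d J : ℕ} (z : Fin J → Fin d → ℝ) : 0 ≤ ensEnergy J z :=
  mul_nonneg (by positivity) (Finset.sum_nonneg fun j _ => enormSq_nonneg _)

lemma enormSq_sub_smul {d : ℕ} (a b : Fin d → ℝ) (h : ℝ) :
    enormSq (a - h • b) = enormSq a - 2*h*(a ⬝ᵥ b) + h^2 * enormSq b := by
  have : ∀ i, (a i - h * b i)^2 = a i^2 - 2*h*(a i * b i) + h^2 * b i^2 := fun i => by ring
  simp only [enormSq, Pi.sub_apply, Pi.smul_apply, smul_eq_mul, this, Finset.sum_add_distrib,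
    Finset.sum_sub_distrib, ← Finset.mul_sum, dotProduct]

lemma dotProduct_self_eq {d : ℕ} (v : Fin d → ℝ) : v ⬝ᵥ v = enormSq v := by
  simp [dotProduct, enormSq, sq]

section helpers
variable {m : Type*} [Fintype m] {J : ℕ}

lemma sum_dotProduct' (f : Fin J → m → ℝ) (v : m → ℝ) :
    (∑ j, f j) ⬝ᵥ v = ∑ j, f j ⬝ᵥ v := by
  simp only [dotProduct, Finset.sum_apply, Finset.sum_mul]
  exact Finset.sum_comm

lemma dotProduct_sum' (v : m → ℝ) (f : Fin J → m → ℝ) :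
    v ⬝ᵥ (∑ j, f j) = ∑ j, v ⬝ᵥ f j := by
  simp only [dotProduct, Finset.sum_apply, Finset.mul_sum]
  exact Finset.sum_comm

lemma sum_mulVec' {n : Type*} [Fintype n] (f : Fin J → Matrix m n ℝ) (v : n → ℝ) :
    (∑ j, f j) *ᵥ v = ∑ j, (f j *ᵥ v) := by
  ext i
  exact congrFun (Matrix.sum_mulVec _ _ _) i

lemma vecMulVec_mulVec' (a b v : m → ℝ) :
    vecMulVec a b *ᵥ v = (b ⬝ᵥ v) • a := by
  ext i
  show (vecMulVec a b) i ⬝ᵥ v = _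
  simp only [vecMulVec_apply, Pi.smul_apply, smul_eq_mul, dotProduct, Finset.sum_mul]
  exact Finset.sum_congr rfl fun l _ => by ring

end helpers

lemma cov_mulVec {d J : ℕ} (z : Fin J → Fin d → ℝ) (v : Fin d → ℝ) :
    ensCov J z *ᵥ v = (J:ℝ)⁻¹ • ∑ k, (ensSpread J z k ⬝ᵥ v) • ensSpread J z k := by
  rw [ensCov, Matrix.smul_mulVec, sum_mulVec']
  congr 1
  exact Finset.sum_congr rfl fun k _ => vecMulVec_mulVec' _ _ _

lemma cross_gram_nonneg {d p J : ℕ} (e : Fin J → Fin d → ℝ) (f : Fin J → Fin p → ℝ) :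
    0 ≤ ∑ j, ∑ k, (e j ⬝ᵥ e k) * (f j ⬝ᵥ f k) := by
  have hjk : ∀ j k : Fin J, (e j ⬝ᵥ e k) * (f j ⬝ᵥ f k)
      = (fun x : Fin d × Fin p => e j x.1 * f j x.2) ⬝ᵥ (fun x => e k x.1 * f k x.2) := by
    intro j k
    rw [dotProduct, dotProduct, Finset.sum_mul_sum]
    rw [show ((fun x : Fin d × Fin p => e j x.1 * f j x.2) ⬝ᵥ (fun x => e k x.1 * f k x.2))
        = ∑ i, ∑ l, (e j i * f j l) * (e k i * f k l) by
      simp [dotProduct, Fintype.sum_prod_type]]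
    exact Finset.sum_congr rfl fun i _ => Finset.sum_congr rfl fun l _ => by ring
  simp only [hjk]
  have h2 : ∑ j, ∑ k, ((fun x : Fin d × Fin p => e j x.1 * f j x.2) ⬝ᵥ (fun x => e k x.1 * f k x.2))
      = (∑ j, fun x : Fin d × Fin p => e j x.1 * f j x.2) ⬝ᵥ (∑ k, fun x : Fin d × Fin p => e k x.1 * f k x.2) := by
    rw [sum_dotProduct']
    exact Finset.sum_congr rfl fun j _ => (dotProduct_sum' _ _).symm
  rw [h2]
  exact Finset.sum_nonneg fun x _ => mul_self_nonneg _

lemma opnorm_mulVec {d : ℕ} (M : Matrix (Fin d) (Fin d) ℝ) (v : Fin d → ℝ) :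
    ‖toE (M *ᵥ v)‖ ≤ opNorm M * ‖toE v‖ := by
  have h1 : toE (M *ᵥ v) = Matrix.toEuclideanCLM (𝕜 := ℝ) M (toE v) := by
    rfl
  rw [h1]
  exact (Matrix.toEuclideanCLM (𝕜 := ℝ) M).le_opNorm _

section mainlemmas
variable {d p J : ℕ}

lemma lemA (hJ : 0 < J) (z : Fin J → Fin d → ℝ) (S : Matrix (Fin p) (Fin d) ℝ) (α : ℝ) (hα : 0 ≤ α) :
    α * (ensEnergy J z)^2 ≤
      ∑ j, ensSpread J z j ⬝ᵥ (ensCov J z *ᵥ ((S)ᵀ *ᵥ (S *ᵥ ensSpread J z j) + α • ensSpread J z j)) := by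
  set e := ensSpread J z with he
  have hJ0 : (0:ℝ) < (J:ℝ) := by exact_mod_cast hJ
  have hterm : ∀ j, e j ⬝ᵥ (ensCov J z *ᵥ ((S)ᵀ *ᵥ (S *ᵥ e j) + α • e j))
      = (J:ℝ)⁻¹ * ∑ k, ((S *ᵥ e k) ⬝ᵥ (S *ᵥ e j) + α * (e k ⬝ᵥ e j)) * (e j ⬝ᵥ e k) := by
    intro j
    rw [cov_mulVec, dotProduct_smul, dotProduct_sum', smul_eq_mul]
    congr 1
    refine Finset.sum_congr rfl fun k _ => ?_
    rw [dotProduct_smul, smul_eq_mul, dotProduct_add, dotProduct_smul, smul_eq_mul,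
      dotProduct_mulVec, vecMul_transpose]
  simp only [hterm]
  rw [← Finset.mul_sum]
  have key : α * ((J:ℝ) * ensEnergy J z)^2 / (J:ℝ)
      ≤ ∑ j, ∑ k, ((S *ᵥ e k) ⬝ᵥ (S *ᵥ e j) + α * (e k ⬝ᵥ e j)) * (e j ⬝ᵥ e k) := by
    have expand : ∑ j, ∑ k, ((S *ᵥ e k) ⬝ᵥ (S *ᵥ e j) + α * (e k ⬝ᵥ e j)) * (e j ⬝ᵥ e k)
        = (∑ j, ∑ k, (e j ⬝ᵥ e k) * ((S *ᵥ e j) ⬝ᵥ (S *ᵥ e k)))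
          + α * ∑ j, ∑ k, (e j ⬝ᵥ e k)^2 := by
      rw [Finset.mul_sum, ← Finset.sum_add_distrib]
      refine Finset.sum_congr rfl fun j _ => ?_
      rw [Finset.mul_sum, ← Finset.sum_add_distrib]
      refine Finset.sum_congr rfl fun k _ => ?_
      rw [dotProduct_comm (e k) (e j), dotProduct_comm (S *ᵥ e k) (S *ᵥ e j), sq]
      ring
    rw [expand]
    have h1 : 0 ≤ ∑ j, ∑ k, (e j ⬝ᵥ e k) * ((S *ᵥ e j) ⬝ᵥ (S *ᵥ e k)) :=
      cross_gram_nonneg e (fun j => S *ᵥ e j)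
    have h2 : ((J:ℝ) * ensEnergy J z)^2 / (J:ℝ) ≤ ∑ j, ∑ k, (e j ⬝ᵥ e k)^2 := by
      have hT : (J:ℝ) * ensEnergy J z = ∑ j, enormSq (e j) := by
        rw [ensEnergy]; field_simp; rfl
      have hd1 : ∀ j : Fin J, enormSq (e j)^2 ≤ ∑ k, (e j ⬝ᵥ e k)^2 := by
        intro j
        have := Finset.single_le_sum (f := fun k => (e j ⬝ᵥ e k)^2)
          (fun k _ => sq_nonneg _) (Finset.mem_univ j)
        simpa [dotProduct_self_eq] using this
      have hcs : (∑ j, enormSq (e j))^2 ≤ (J:ℝ) * ∑ j, enormSq (e j)^2 := by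
        have := sq_sum_le_card_mul_sum_sq (s := Finset.univ) (f := fun j : Fin J => enormSq (e j))
        simpa using this
      calc ((J:ℝ) * ensEnergy J z)^2 / (J:ℝ) = (∑ j, enormSq (e j))^2 / (J:ℝ) := by rw [hT]
        _ ≤ ((J:ℝ) * ∑ j, enormSq (e j)^2) / (J:ℝ) := by gcongr
        _ = ∑ j, enormSq (e j)^2 := by field_simp
        _ ≤ ∑ j, ∑ k, (e j ⬝ᵥ e k)^2 := Finset.sum_le_sum fun j _ => hd1 j
    rw [mul_div_assoc]
    have h3 := mul_le_mul_of_nonneg_left h2 hα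
    linarith
  calc α * (ensEnergy J z)^2 = (J:ℝ)⁻¹ * (α * ((J:ℝ) * ensEnergy J z)^2 / (J:ℝ)) := by
        field_simp
    _ ≤ _ := mul_le_mul_of_nonneg_left key (by positivity)

lemma lemB (z : Fin J → Fin d → ℝ) (v : Fin d → ℝ) :
    enormSq (ensCov J z *ᵥ v) ≤ (ensEnergy J z)^2 * enormSq v := by
  set e := ensSpread J z with he
  have hnorm : ‖toE (ensCov J z *ᵥ v)‖ ≤ ensEnergy J z * ‖toE v‖ := by
    rw [cov_mulVec]
    rw [show toE ((J:ℝ)⁻¹ • ∑ k, (e k ⬝ᵥ v) • e k) = (J:ℝ)⁻¹ • ∑ k, (e k ⬝ᵥ v) • toE (e k) by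
      rw [toE_smul, toE_sum]; simp only [toE_smul]]
    rw [norm_smul, Real.norm_eq_abs, abs_of_nonneg (by positivity)]
    calc (J:ℝ)⁻¹ * ‖∑ k, (e k ⬝ᵥ v) • toE (e k)‖
        ≤ (J:ℝ)⁻¹ * ∑ k, ‖(e k ⬝ᵥ v) • toE (e k)‖ := by
          gcongr; exact norm_sum_le _ _
      _ ≤ (J:ℝ)⁻¹ * ∑ k, enormSq (e k) * ‖toE v‖ := by
          refine mul_le_mul_of_nonneg_left (Finset.sum_le_sum fun k _ => ?_) (by positivity)
          rw [norm_smul, Real.norm_eq_abs, ← inner_toE]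
          calc |(inner ℝ (toE (e k)) (toE v) : ℝ)| * ‖toE (e k)‖
              ≤ (‖toE (e k)‖ * ‖toE v‖) * ‖toE (e k)‖ := by
                gcongr; exact abs_real_inner_le_norm _ _
            _ = enormSq (e k) * ‖toE v‖ := by rw [norm_toE_nonneg_sq]; ring
      _ = ensEnergy J z * ‖toE v‖ := by
          rw [ensEnergy, ← Finset.sum_mul]; ring
  calc enormSq (ensCov J z *ᵥ v) = ‖toE (ensCov J z *ᵥ v)‖^2 := norm_toE_nonneg_sq _
    _ ≤ (ensEnergy J z * ‖toE v‖)^2 := pow_le_pow_left₀ (norm_nonneg _) hnorm 2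
    _ = (ensEnergy J z)^2 * enormSq v := by rw [mul_pow, norm_toE_sq]

lemma lemC (S : Matrix (Fin p) (Fin d) ℝ) (α Amax : ℝ) (hα : 0 ≤ α) (hAmax : 0 ≤ Amax)
    (hS : opNorm (Sᵀ * S) ≤ Amax) (v : Fin d → ℝ) :
    enormSq ((S)ᵀ *ᵥ (S *ᵥ v) + α • v) ≤ (Amax + α)^2 * enormSq v := by
  have hw : ‖toE ((S)ᵀ *ᵥ (S *ᵥ v) + α • v)‖ ≤ (Amax + α) * ‖toE v‖ := by
    rw [toE_add, mulVec_mulVec, toE_smul]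
    calc ‖toE ((Sᵀ * S) *ᵥ v) + α • toE v‖ ≤ ‖toE ((Sᵀ * S) *ᵥ v)‖ + ‖α • toE v‖ := norm_add_le _ _
      _ ≤ Amax * ‖toE v‖ + α * ‖toE v‖ := by
          gcongr
          · exact (opnorm_mulVec _ _).trans (mul_le_mul_of_nonneg_right hS (norm_nonneg _))
          · rw [norm_smul, Real.norm_eq_abs, abs_of_nonneg hα]
      _ = (Amax + α) * ‖toE v‖ := by ring
  calc enormSq ((S)ᵀ *ᵥ (S *ᵥ v) + α • v) = ‖toE ((S)ᵀ *ᵥ (S *ᵥ v) + α • v)‖^2 :=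
        norm_toE_nonneg_sq _
    _ ≤ ((Amax + α) * ‖toE v‖)^2 := pow_le_pow_left₀ (norm_nonneg _) hw 2
    _ = (Amax + α)^2 * enormSq v := by rw [mul_pow, norm_toE_sq]

lemma spread_rec (hJ : 0 < J) (α h : ℝ)
    (C : Matrix (Fin d) (Fin d) ℝ) (S : Matrix (Fin p) (Fin d) ℝ) (u : Fin p → ℝ)
    (zt zt' : Fin J → Fin d → ℝ)
    (hupd : ∀ j, zt' j = zt j - h • (C *ᵥ (Sᵀ *ᵥ (S *ᵥ zt j - u) + α • zt j))) (j : Fin J) :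
    ensSpread J zt' j = ensSpread J zt j
      - h • (C *ᵥ (Sᵀ *ᵥ (S *ᵥ ensSpread J zt j) + α • ensSpread J zt j)) := by
  have hJ0 : ((J:ℝ)) ≠ 0 := Nat.cast_ne_zero.mpr hJ.ne'
  set L : (Fin d → ℝ) →ₗ[ℝ] (Fin d → ℝ) :=
    C.mulVecLin ∘ₗ ((Sᵀ).mulVecLin ∘ₗ S.mulVecLin + α • LinearMap.id) with hLdef
  have hL : ∀ v, L v = C *ᵥ (Sᵀ *ᵥ (S *ᵥ v) + α • v) := by
    intro v
    simp only [hLdef, LinearMap.comp_apply, LinearMap.add_apply, LinearMap.smul_apply,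
      LinearMap.id_apply, Matrix.mulVecLin_apply, smul_eq_mul]
  set c : Fin d → ℝ := C *ᵥ (Sᵀ *ᵥ u) with hc
  have hz' : ∀ j, zt' j = zt j - h • L (zt j) + h • c := by
    intro j
    rw [hupd j, hL]
    have hin : Sᵀ *ᵥ (S *ᵥ zt j - u) + α • zt j
        = (Sᵀ *ᵥ (S *ᵥ zt j) + α • zt j) - Sᵀ *ᵥ u := by
      rw [Matrix.mulVec_sub]; abel
    rw [hin, Matrix.mulVec_sub, smul_sub]
    abel
  have hmean : ensMean J zt' = ensMean J zt - h • L (ensMean J zt) + h • c := by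
    rw [ensMean]
    have hsum : ∑ j, zt' j = ∑ j, zt j - h • L (∑ j, zt j) + (J:ℝ) • (h • c) := by
      calc ∑ j, zt' j = ∑ j, (zt j - h • L (zt j) + h • c) := Finset.sum_congr rfl fun j _ => hz' j
        _ = ∑ j, zt j - h • L (∑ j, zt j) + (J:ℝ) • (h • c) := by
            rw [Finset.sum_add_distrib, Finset.sum_sub_distrib, map_sum, ← Finset.smul_sum,
              Finset.sum_const, Finset.card_univ, Fintype.card_fin]
            congr 1
            rw [← Nat.cast_smul_eq_nsmul ℝ]
    rw [ensMean, hsum, _root_.map_smul L]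
    have hcancel : ((J:ℝ))⁻¹ • (J:ℝ) • (h • c) = h • c := by
      rw [smul_smul, inv_mul_cancel₀ hJ0, one_smul]
    rw [smul_add, hcancel, smul_sub]
    module
  have hfin : ensSpread J zt' j = ensSpread J zt j - h • L (ensSpread J zt j) := by
    rw [ensSpread, ensSpread, hz' j, hmean, map_sub]
    module
  rw [hfin, hL]

end mainlemmas

section steplemma
variable {d p J : ℕ}

lemma step_energy (hJ : 0 < J) (α h Amax : ℝ) (hα : 0 < α) (hh : 0 < h) (hAmax : 0 ≤ Amax)
    (S : Matrix (Fin p) (Fin d) ℝ) (hS : opNorm (Sᵀ * S) ≤ Amax)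
    (zt zt' : Fin J → Fin d → ℝ)
    (hsp : ∀ j, ensSpread J zt' j = ensSpread J zt j
      - h • (ensCov J zt *ᵥ (Sᵀ *ᵥ (S *ᵥ ensSpread J zt j) + α • ensSpread J zt j))) :
    ensEnergy J zt' ≤ ensEnergy J zt - (2*h*α/(J:ℝ)) * (ensEnergy J zt)^2
      + h^2 * (Amax+α)^2 * (ensEnergy J zt)^3 := by
  set e := ensSpread J zt with he
  set C := ensCov J zt with hC
  set E := ensEnergy J zt with hE
  set w : Fin J → Fin d → ℝ := fun j => Sᵀ *ᵥ (S *ᵥ e j) + α • e j with hw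
  have hJ0 : (0:ℝ) < (J:ℝ) := by exact_mod_cast hJ
  have hEnn : 0 ≤ E := ensEnergy_nonneg zt
  have hexp : ensEnergy J zt' = E - 2*h*((J:ℝ)⁻¹ * ∑ j, e j ⬝ᵥ (C *ᵥ w j))
      + h^2 * ((J:ℝ)⁻¹ * ∑ j, enormSq (C *ᵥ w j)) := by
    rw [ensEnergy]
    have hterm : ∀ j, enormSq (ensSpread J zt' j)
        = enormSq (e j) - 2*h*(e j ⬝ᵥ (C *ᵥ w j)) + h^2 * enormSq (C *ᵥ w j) := fun j => by
      rw [hsp j, enormSq_sub_smul]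
    rw [Finset.sum_congr rfl fun j _ => hterm j, Finset.sum_add_distrib,
      Finset.sum_sub_distrib, ← Finset.mul_sum, ← Finset.mul_sum, hE, ensEnergy]
    ring
  have hlow : α * E^2 ≤ ∑ j, e j ⬝ᵥ (C *ᵥ w j) := lemA hJ zt S α hα.le
  have hT : ∑ j, enormSq (e j) = (J:ℝ) * E := by
    rw [hE, ensEnergy]; field_simp; rfl
  have hup : ∑ j, enormSq (C *ᵥ w j) ≤ (J:ℝ) * ((Amax+α)^2 * E^3) := by
    calc ∑ j, enormSq (C *ᵥ w j) ≤ ∑ j, E^2 * enormSq (w j) :=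
          Finset.sum_le_sum fun j _ => lemB zt (w j)
      _ ≤ ∑ j, E^2 * ((Amax+α)^2 * enormSq (e j)) :=
          Finset.sum_le_sum fun j _ =>
            mul_le_mul_of_nonneg_left (lemC S α Amax hα.le hAmax hS (e j)) (sq_nonneg E)
      _ = (E^2*(Amax+α)^2) * ∑ j, enormSq (e j) := by
          rw [Finset.sum_congr rfl fun j _ =>
            (show E^2 * ((Amax+α)^2 * enormSq (e j)) = (E^2*(Amax+α)^2) * enormSq (e j) by ring),
            ← Finset.mul_sum]
      _ = (J:ℝ) * ((Amax+α)^2 * E^3) := by rw [hT]; ring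
  rw [hexp]
  have b1 : 2*h*((J:ℝ)⁻¹*(α*E^2)) ≤ 2*h*((J:ℝ)⁻¹ * ∑ j, e j ⬝ᵥ (C *ᵥ w j)) :=
    mul_le_mul_of_nonneg_left
      (mul_le_mul_of_nonneg_left hlow (by positivity)) (by positivity)
  have b2 : h^2*((J:ℝ)⁻¹ * ∑ j, enormSq (C *ᵥ w j))
      ≤ h^2*((J:ℝ)⁻¹*((J:ℝ)*((Amax+α)^2*E^3))) :=
    mul_le_mul_of_nonneg_left
      (mul_le_mul_of_nonneg_left hup (by positivity)) (by positivity)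
  have heq1 : 2*h*((J:ℝ)⁻¹*(α*E^2)) = (2*h*α/(J:ℝ))*E^2 := by field_simp
  have heq2 : h^2*((J:ℝ)⁻¹*((J:ℝ)*((Amax+α)^2*E^3))) = h^2*(Amax+α)^2*E^3 := by
    field_simp
  linarith

end steplemma

/-- Monotone decay of the DEKI spread energy: if `‖A_t‖ ≤ A_max` for all `t ≥ 1`,
`E_0 > 0` and `h ≤ (α/(J(A_max + α)²))·E_0⁻¹`, then for every `t ∈ ℕ` one has
`E_{t+1} ≤ E_t − (hα/J)·E_t²`; in particular `(E_t)` is monotonically decreasing. -/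
theorem deki_energy_monotone_decay
    {d p J : ℕ} (hd : 0 < d) (hp : 0 < p) (hJ : 0 < J)
    (α h Amax : ℝ) (hα : 0 < α) (hh : 0 < h) (hAmax : 0 < Amax)
    (S : ℕ → Matrix (Fin p) (Fin d) ℝ) (u : ℕ → Fin p → ℝ)
    (z : ℕ → Fin J → Fin d → ℝ)
    (hupd : ∀ t j, z (t+1) j = z t j -
      h • ((ensCov J (z t)) *ᵥ ((S (t+1))ᵀ *ᵥ ((S (t+1)) *ᵥ (z t j) - u (t+1)) + α • z t j)))
    (hA : ∀ t : ℕ, 1 ≤ t → opNorm ((S t)ᵀ * (S t)) ≤ Amax)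
    (hE0 : 0 < ensEnergy J (z 0))
    (hstep : h ≤ α / ((J:ℝ) * (Amax + α)^2) * (ensEnergy J (z 0))⁻¹) :
    (∀ t : ℕ, ensEnergy J (z (t+1)) ≤ ensEnergy J (z t)
        - (h*α/(J:ℝ)) * (ensEnergy J (z t))^2) ∧
    Antitone (fun t => ensEnergy J (z t)) := by
  have hJ0 : (0:ℝ) < (J:ℝ) := by exact_mod_cast hJ
  have hspr : ∀ t j, ensSpread J (z (t+1)) j = ensSpread J (z t) j
      - h • (ensCov J (z t) *ᵥ ((S (t+1))ᵀ *ᵥ ((S (t+1)) *ᵥ ensSpread J (z t) j)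
        + α • ensSpread J (z t) j)) :=
    fun t j => spread_rec hJ α h (ensCov J (z t)) (S (t+1)) (u (t+1)) (z t) (z (t+1))
      (hupd t) j
  have hstep' : ∀ t, ensEnergy J (z (t+1)) ≤ ensEnergy J (z t)
      - (2*h*α/(J:ℝ)) * (ensEnergy J (z t))^2
      + h^2 * (Amax+α)^2 * (ensEnergy J (z t))^3 :=
    fun t => step_energy hJ α h Amax hα hh hAmax.le (S (t+1))
      (hA (t+1) (Nat.le_add_left 1 t)) (z t) (z (t+1)) (hspr t)
  have hEnn : ∀ t, 0 ≤ ensEnergy J (z t) := fun t => ensEnergy_nonneg (z t)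
  have hAα : (0:ℝ) < Amax + α := by linarith
  have hkey : h * (Amax+α)^2 * ensEnergy J (z 0) ≤ α/(J:ℝ) := by
    have h2 := mul_le_mul_of_nonneg_right hstep
      (le_of_lt (show (0:ℝ) < (Amax+α)^2 * ensEnergy J (z 0) by positivity))
    calc h * (Amax+α)^2 * ensEnergy J (z 0)
        = h * ((Amax+α)^2 * ensEnergy J (z 0)) := by ring
      _ ≤ (α/((J:ℝ)*(Amax+α)^2) * (ensEnergy J (z 0))⁻¹) * ((Amax+α)^2 * ensEnergy J (z 0)) := h2
      _ = α/(J:ℝ) := by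
          field_simp
  have hdec : ∀ t, ensEnergy J (z t) ≤ ensEnergy J (z 0) →
      ensEnergy J (z (t+1)) ≤ ensEnergy J (z t) - (h*α/(J:ℝ)) * (ensEnergy J (z t))^2 := by
    intro t hle
    have h3 : h*(Amax+α)^2*(ensEnergy J (z t)) ≤ α/(J:ℝ) :=
      le_trans (by
        have := mul_le_mul_of_nonneg_left hle
          (show (0:ℝ) ≤ h*(Amax+α)^2 by positivity)
        calc h*(Amax+α)^2*(ensEnergy J (z t))
            = h*(Amax+α)^2*ensEnergy J (z t) := by ring
          _ ≤ h*(Amax+α)^2*ensEnergy J (z 0) := by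
              calc h*(Amax+α)^2*ensEnergy J (z t)
                  = (h*(Amax+α)^2)*ensEnergy J (z t) := by ring
                _ ≤ (h*(Amax+α)^2)*ensEnergy J (z 0) := this
                _ = h*(Amax+α)^2*ensEnergy J (z 0) := by ring) hkey
    have h4 : h^2*(Amax+α)^2*(ensEnergy J (z t))^3
        ≤ (α/(J:ℝ))*(h*(ensEnergy J (z t))^2) := by
      calc h^2*(Amax+α)^2*(ensEnergy J (z t))^3
          = (h*(Amax+α)^2*(ensEnergy J (z t)))*(h*(ensEnergy J (z t))^2) := by ring
        _ ≤ (α/(J:ℝ))*(h*(ensEnergy J (z t))^2) :=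
            mul_le_mul_of_nonneg_right h3 (by positivity)
    have h5 := hstep' t
    calc ensEnergy J (z (t+1))
        ≤ ensEnergy J (z t) - (2*h*α/(J:ℝ)) * (ensEnergy J (z t))^2
          + h^2 * (Amax+α)^2 * (ensEnergy J (z t))^3 := h5
      _ ≤ ensEnergy J (z t) - (2*h*α/(J:ℝ)) * (ensEnergy J (z t))^2
          + (α/(J:ℝ))*(h*(ensEnergy J (z t))^2) := by linarith
      _ = ensEnergy J (z t) - (h*α/(J:ℝ)) * (ensEnergy J (z t))^2 := by ring
  have hmono : ∀ t, ensEnergy J (z t) ≤ ensEnergy J (z 0) := by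
    intro t
    induction t with
    | zero => exact le_refl _
    | succ n ih =>
        have h6 := hdec n ih
        have h7 : (0:ℝ) ≤ (h*α/(J:ℝ)) * (ensEnergy J (z n))^2 := by positivity
        linarith
  have hfirst : ∀ t : ℕ, ensEnergy J (z (t+1)) ≤ ensEnergy J (z t)
      - (h*α/(J:ℝ)) * (ensEnergy J (z t))^2 := fun t => hdec t (hmono t)
  refine ⟨hfirst, antitone_nat_of_succ_le fun t => ?_⟩
  have h7 : (0:ℝ) ≤ (h*α/(J:ℝ)) * (ensEnergy J (z t))^2 := by positivity
  have := hfirst t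
  simpa using by linarith [hfirst t, h7]
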